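/- Let D = {x ∈ ℝ³ : x₃ > 0} and let u : ℝ³ → ℝ³ be C³ up to the boundary, divergence-free, with u(x) = 0 for all x with x₃ = 0. Let ω = ∇∧u and θ(x₁,x₂) = ω(x₁,x₂,0). Then at every boundary point, ∂²ω²/∂x₃² = ∂³u¹/∂x₃³ + Δ_Γ θ² − ∂/∂x₂ (∇^Γ·θ). -/

import Mathlib

/-- Partial derivative of a scalar field on `ℝⁿ` in the `i`-th coordinate direction. -/
noncomputable def pd {n : ℕ} (i : Fin n) (f : (Fin n → ℝ) → ℝ) (x : Fin n → ℝ) : ℝ :=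
  fderiv ℝ f x (Pi.single i 1)

/-- The curl (vorticity) `ω = ∇ ∧ u` of a vector field on `ℝ³`. -/
noncomputable def curl3 (u : (Fin 3 → ℝ) → Fin 3 → ℝ) (x : Fin 3 → ℝ) : Fin 3 → ℝ :=
  ![pd 1 (fun y => u y 2) x - pd 2 (fun y => u y 1) x,
    pd 2 (fun y => u y 0) x - pd 0 (fun y => u y 2) x,
    pd 0 (fun y => u y 1) x - pd 1 (fun y => u y 0) x]

/-- The boundary vorticity `θ(x₁,x₂) = ω(x₁,x₂,0)` as a field on `∂D = ℝ²`. -/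
noncomputable def bdryVort (u : (Fin 3 → ℝ) → Fin 3 → ℝ) (p : Fin 2 → ℝ) : Fin 3 → ℝ :=
  curl3 u ![p 0, p 1, 0]

/- ## Auxiliary lemmas -/

lemma contDiff_pd {n m : ℕ} (i : Fin n) {f : (Fin n → ℝ) → ℝ}
    (hf : ContDiff ℝ (m + 1 : ℕ) f) : ContDiff ℝ (m : ℕ) (pd i f) := by
  have h : ContDiff ℝ (m : ℕ) (fderiv ℝ f) := hf.fderiv_right (by exact_mod_cast le_refl _)
  exact (ContinuousLinearMap.apply ℝ ℝ (Pi.single i 1)).contDiff.comp h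

lemma pd_comm {n : ℕ} (i j : Fin n) {f : (Fin n → ℝ) → ℝ}
    (hf : ContDiff ℝ 2 f) (x : Fin n → ℝ) :
    pd i (pd j f) x = pd j (pd i f) x := by
  have h1 : ContDiff ℝ 1 (fderiv ℝ f) := hf.fderiv_right (by norm_num)
  have key : ∀ (k l : Fin n),
      pd k (pd l f) x = fderiv ℝ (fderiv ℝ f) x (Pi.single k 1) (Pi.single l 1) := by
    intro k l
    unfold pd
    have hcomp : (fun y => fderiv ℝ f y (Pi.single l 1))
        = (ContinuousLinearMap.apply ℝ ℝ (Pi.single l 1)) ∘ (fderiv ℝ f) := rfl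
    rw [hcomp, fderiv_comp x (ContinuousLinearMap.differentiableAt _)
      (h1.differentiable (by norm_num) x), ContinuousLinearMap.fderiv]
    rfl
  rw [key i j, key j i]
  exact (hf.contDiffAt.isSymmSndFDerivAt (by norm_num)) _ _

noncomputable def embL : (Fin 2 → ℝ) →L[ℝ] (Fin 3 → ℝ) :=
  LinearMap.toContinuousLinearMap
    { toFun := fun p => ![p 0, p 1, 0]
      map_add' := by intro p q; funext i; fin_cases i <;> simp
      map_smul' := by intro c p; funext i; fin_cases i <;> simp }

lemma embL_apply (p : Fin 2 → ℝ) : embL p = ![p 0, p 1, 0] := rfl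

lemma embL_single0 : embL (Pi.single (0 : Fin 2) 1) = Pi.single (0 : Fin 3) 1 := by
  funext i; fin_cases i <;> simp [embL_apply]

lemma embL_single1 : embL (Pi.single (1 : Fin 2) 1) = Pi.single (1 : Fin 3) 1 := by
  funext i; fin_cases i <;> simp [embL_apply]

lemma pd_comp_embL {f : (Fin 3 → ℝ) → ℝ} {p : Fin 2 → ℝ}
    (hf : DifferentiableAt ℝ f (embL p)) (i : Fin 2) (j : Fin 3)
    (hij : embL (Pi.single i 1) = Pi.single j 1) :
    pd i (fun q => f (embL q)) p = pd j f (embL p) := by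
  unfold pd
  have hcomp : (fun q => f (embL q)) = f ∘ embL := rfl
  rw [hcomp, fderiv_comp p hf embL.differentiableAt, embL.fderiv]
  simp [hij]

lemma pd_sub {n : ℕ} (i : Fin n) {f g : (Fin n → ℝ) → ℝ} {x : Fin n → ℝ}
    (hf : DifferentiableAt ℝ f x) (hg : DifferentiableAt ℝ g x) :
    pd i (fun y => f y - g y) x = pd i f x - pd i g x := by
  unfold pd; rw [fderiv_fun_sub hf hg]; simp

lemma pd_add {n : ℕ} (i : Fin n) {f g : (Fin n → ℝ) → ℝ} {x : Fin n → ℝ}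
    (hf : DifferentiableAt ℝ f x) (hg : DifferentiableAt ℝ g x) :
    pd i (fun y => f y + g y) x = pd i f x + pd i g x := by
  unfold pd; rw [fderiv_fun_add hf hg]; simp

lemma pd_neg {n : ℕ} (i : Fin n) {f : (Fin n → ℝ) → ℝ} {x : Fin n → ℝ} :
    pd i (fun y => -f y) x = -pd i f x := by
  unfold pd; rw [fderiv_fun_neg]; simp

lemma pd_zero {n : ℕ} (i : Fin n) (x : Fin n → ℝ) :
    pd i (fun _ => (0 : ℝ)) x = 0 := by
  unfold pd; rw [fderiv_fun_const]; simp

/-- for a `C³`, divergence-free vector field `u` on the upper half space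
vanishing on the boundary `{x₃ = 0}`, at every boundary point
`∂²ω²/∂x₃² = ∂³u¹/∂x₃³ + Δ_Γ θ² − ∂/∂x₂(∇^Γ·θ)`, where `θ(x₁,x₂) = ω(x₁,x₂,0)`. -/
theorem second_normal_derivative_omega2
    (u : (Fin 3 → ℝ) → Fin 3 → ℝ)
    (hu : ContDiff ℝ 3 u)
    (hdiv : ∀ x : Fin 3 → ℝ, ∑ i : Fin 3, pd i (fun y => u y i) x = 0)
    (hnoslip : ∀ x : Fin 3 → ℝ, x 2 = 0 → u x = 0) :
    ∀ x : Fin 3 → ℝ, x 2 = 0 →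
      pd 2 (pd 2 (fun y => curl3 u y 1)) x
        = pd 2 (pd 2 (pd 2 (fun y => u y 0))) x
          + (pd 0 (pd 0 (fun p => bdryVort u p 1)) ![x 0, x 1]
              + pd 1 (pd 1 (fun p => bdryVort u p 1)) ![x 0, x 1])
          - pd 1 (fun p => pd 0 (fun q => bdryVort u q 0) p
              + pd 1 (fun q => bdryVort u q 1) p) ![x 0, x 1] := by
  intro x hx
  -- regularity bookkeeping
  have hui : ∀ k : Fin 3, ContDiff ℝ ((2 + 1 : ℕ)) (fun y => u y k) := fun k => by
    have := contDiff_pi.mp hu k; exact_mod_cast this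
  have hC2 : ∀ i k : Fin 3, ContDiff ℝ ((2 : ℕ)) (pd i (fun y => u y k)) :=
    fun i k => contDiff_pd i (hui k)
  have hC1 : ∀ i j k : Fin 3, ContDiff ℝ ((1 : ℕ)) (pd i (pd j (fun y => u y k))) :=
    fun i j k => contDiff_pd i (hC2 j k)
  have hDu : ∀ (k : Fin 3) (y), DifferentiableAt ℝ (fun z => u z k) y := fun k y =>
    ((hui k).differentiable (by norm_num)).differentiableAt
  have hD2 : ∀ (i k : Fin 3) (y), DifferentiableAt ℝ (pd i (fun z => u z k)) y := fun i k y =>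
    ((hC2 i k).differentiable (by norm_num)).differentiableAt
  have hD1 : ∀ (i j k : Fin 3) (y), DifferentiableAt ℝ (pd i (pd j (fun z => u z k))) y :=
    fun i j k y => ((hC1 i j k).differentiable (by norm_num)).differentiableAt
  have hCc2 : ∀ k : Fin 3, ContDiff ℝ 2 (fun y => u y k) := fun k =>
    (hui k).of_le (by exact_mod_cast Nat.le_succ 2)
  have hCc2' : ∀ i k : Fin 3, ContDiff ℝ 2 (pd i (fun y => u y k)) := fun i k => by
    exact_mod_cast hC2 i k
  -- boundary facts
  have hLq : embL ![x 0, x 1] = x := by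
    funext i; fin_cases i <;> simp [embL_apply, hx]
  have hbz : ∀ q : Fin 2 → ℝ, u (embL q) = 0 := fun q =>
    hnoslip _ (by simp [embL_apply])
  have htan : ∀ (p : Fin 2 → ℝ) (i : Fin 2) (j : Fin 3),
      embL (Pi.single i 1) = Pi.single j 1 →
      ∀ k : Fin 3, pd j (fun y => u y k) (embL p) = 0 := by
    intro p i j hij k
    have h1 : pd i (fun q' => (fun y => u y k) (embL q')) p = pd j (fun y => u y k) (embL p) :=
      pd_comp_embL (hDu k _) i j hij
    rw [← h1]
    have h2 : (fun q' => (fun y => u y k) (embL q')) = fun _ => (0 : ℝ) := by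
      funext q'; simp [hbz q']
    rw [h2, pd_zero]
  -- boundary vorticity components
  have hth1 : (fun p => bdryVort u p 1) = fun p => pd 2 (fun y => u y 0) (embL p) := by
    funext p
    show curl3 u ![p 0, p 1, 0] 1 = _
    rw [← embL_apply p]
    simp only [curl3, Matrix.cons_val_one, Matrix.head_cons, Matrix.cons_val_zero]
    rw [htan p 0 0 embL_single0 2, sub_zero]
  have hth0 : (fun p => bdryVort u p 0) = fun p => -pd 2 (fun y => u y 1) (embL p) := by
    funext p
    show curl3 u ![p 0, p 1, 0] 0 = _
    rw [← embL_apply p]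
    simp only [curl3, Matrix.cons_val_zero]
    rw [htan p 1 1 embL_single1 2, zero_sub]
  -- Piece A : LHS
  have hA : pd 2 (pd 2 (fun y => curl3 u y 1)) x
      = pd 2 (pd 2 (pd 2 (fun y => u y 0))) x - pd 2 (pd 2 (pd 0 (fun y => u y 2))) x := by
    have hc : (fun y => curl3 u y 1)
        = fun y => pd 2 (fun z => u z 0) y - pd 0 (fun z => u z 2) y := by
      funext y; simp [curl3]
    rw [hc]
    have h1 : pd 2 (fun y => pd 2 (fun z => u z 0) y - pd 0 (fun z => u z 2) y)
        = fun y => pd 2 (pd 2 (fun z => u z 0)) y - pd 2 (pd 0 (fun z => u z 2)) y := by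
      funext y; exact pd_sub 2 (hD2 2 0 y) (hD2 0 2 y)
    rw [h1]
    exact pd_sub 2 (hD1 2 2 0 x) (hD1 2 0 2 x)
  -- Piece B1
  have hB1 : pd 0 (pd 0 (fun p => bdryVort u p 1)) ![x 0, x 1]
      = pd 0 (pd 0 (pd 2 (fun y => u y 0))) x := by
    rw [hth1]
    have h1 : pd 0 (fun p => pd 2 (fun y => u y 0) (embL p))
        = fun p => pd 0 (pd 2 (fun y => u y 0)) (embL p) :=
      funext fun p => pd_comp_embL (hD2 2 0 _) 0 0 embL_single0
    rw [h1, pd_comp_embL (hD1 0 2 0 _) 0 0 embL_single0, hLq]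
  -- Piece B2
  have hB2 : pd 1 (pd 1 (fun p => bdryVort u p 1)) ![x 0, x 1]
      = pd 1 (pd 1 (pd 2 (fun y => u y 0))) x := by
    rw [hth1]
    have h1 : pd 1 (fun p => pd 2 (fun y => u y 0) (embL p))
        = fun p => pd 1 (pd 2 (fun y => u y 0)) (embL p) :=
      funext fun p => pd_comp_embL (hD2 2 0 _) 1 1 embL_single1
    rw [h1, pd_comp_embL (hD1 1 2 0 _) 1 1 embL_single1, hLq]
  -- Piece C
  have hCp : pd 1 (fun p => pd 0 (fun q => bdryVort u q 0) p
        + pd 1 (fun q => bdryVort u q 1) p) ![x 0, x 1]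
      = -pd 1 (pd 0 (pd 2 (fun y => u y 1))) x + pd 1 (pd 1 (pd 2 (fun y => u y 0))) x := by
    have h0 : (fun p => pd 0 (fun q => bdryVort u q 0) p + pd 1 (fun q => bdryVort u q 1) p)
        = fun p => -pd 0 (pd 2 (fun y => u y 1)) (embL p)
            + pd 1 (pd 2 (fun y => u y 0)) (embL p) := by
      funext p
      rw [hth0, hth1]
      rw [show pd 0 (fun p' => -pd 2 (fun y => u y 1) (embL p')) p
          = -pd 0 (fun p' => pd 2 (fun y => u y 1) (embL p')) p from pd_neg 0,
        pd_comp_embL (hD2 2 1 _) 0 0 embL_single0,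
        pd_comp_embL (hD2 2 0 _) 1 1 embL_single1]
    rw [h0]
    have hdA : DifferentiableAt ℝ
        (fun p => -pd 0 (pd 2 (fun y => u y 1)) (embL p)) ![x 0, x 1] :=
      (((hD1 0 2 1 _).comp _ embL.differentiableAt).neg)
    have hdB : DifferentiableAt ℝ
        (fun p => pd 1 (pd 2 (fun y => u y 0)) (embL p)) ![x 0, x 1] :=
      ((hD1 1 2 0 _).comp _ embL.differentiableAt)
    rw [pd_add 1 hdA hdB,
      show pd 1 (fun p => -pd 0 (pd 2 (fun y => u y 1)) (embL p)) ![x 0, x 1]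
        = -pd 1 (fun p => pd 0 (pd 2 (fun y => u y 1)) (embL p)) ![x 0, x 1] from pd_neg 1,
      pd_comp_embL (hD1 0 2 1 _) 1 1 embL_single1,
      pd_comp_embL (hD1 1 2 0 _) 1 1 embL_single1, hLq]
  -- divergence identity, twice differentiated
  have hdiv3 : pd 0 (pd 2 (pd 2 (fun y => u y 2))) x
      = -pd 0 (pd 2 (pd 0 (fun y => u y 0))) x - pd 0 (pd 2 (pd 1 (fun y => u y 1))) x := by
    have h1 : pd 2 (fun y => u y 2)
        = fun y => -pd 0 (fun z => u z 0) y - pd 1 (fun z => u z 1) y := by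
      funext y; have h := hdiv y; rw [Fin.sum_univ_three] at h; linarith
    have h2 : pd 2 (pd 2 (fun y => u y 2))
        = fun y => -pd 2 (pd 0 (fun z => u z 0)) y - pd 2 (pd 1 (fun z => u z 1)) y := by
      funext y
      rw [h1, pd_sub 2 ((hD2 0 0 y).fun_neg) (hD2 1 1 y),
        show pd 2 (fun y => -pd 0 (fun z => u z 0) y) y
          = -pd 2 (pd 0 (fun z => u z 0)) y from pd_neg 2]
    rw [h2, pd_sub 0 ((hD1 2 0 0 x).fun_neg) (hD1 2 1 1 x),
      show pd 0 (fun y => -pd 2 (pd 0 (fun z => u z 0)) y) x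
        = -pd 0 (pd 2 (pd 0 (fun z => u z 0))) x from pd_neg 0]
  -- commutation of partials
  have key1 : pd 2 (pd 2 (pd 0 (fun y => u y 2))) x
      = pd 0 (pd 2 (pd 2 (fun y => u y 2))) x := by
    rw [show pd 2 (pd 0 (fun y => u y 2)) = pd 0 (pd 2 (fun y => u y 2)) from
      funext fun y => pd_comm 2 0 (hCc2 2) y]
    exact pd_comm 2 0 (hCc2' 2 2) x
  have key2 : pd 0 (pd 2 (pd 0 (fun y => u y 0))) x
      = pd 0 (pd 0 (pd 2 (fun y => u y 0))) x := by
    rw [show pd 2 (pd 0 (fun y => u y 0)) = pd 0 (pd 2 (fun y => u y 0)) from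
      funext fun y => pd_comm 2 0 (hCc2 0) y]
  have key3 : pd 0 (pd 2 (pd 1 (fun y => u y 1))) x
      = pd 1 (pd 0 (pd 2 (fun y => u y 1))) x := by
    rw [show pd 2 (pd 1 (fun y => u y 1)) = pd 1 (pd 2 (fun y => u y 1)) from
      funext fun y => pd_comm 2 1 (hCc2 1) y]
    exact pd_comm 0 1 (hCc2' 2 1) x
  rw [hA, hB1, hB2, hCp]
  linarith [key1, key2, key3, hdiv3]
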